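/- For a continuous curve λ : I → ℝ² whose support is a line segment of length s, the quantities μ_n(λ) = s/n for all n ∈ ℕ, hence the μ-length of λ equals s·S with S = Σ_{n≥1} 1/(n·2ⁿ), and the μ-parametrization r_λ : [0, μ_λ] → λ(I) is the linear (constant-speed) parametrization of the segment. -/

import Mathlib

noncomputable section
open Set Topology

/-- Points of the plane. -/
abbrev Pt : Type := ℝ × ℝ

/-- The closed unit disk `D²`. -/
def closedDisk : Set Pt := {p | p.1 ^ 2 + p.2 ^ 2 ≤ 1}

/-- The open unit disk `Int D²`. -/
def openDisk : Set Pt := {p | p.1 ^ 2 + p.2 ^ 2 < 1}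

/-- The half-disk `D²₊ = { z : |z| < 1, Im z ≥ 0 }`. -/
def chartHalfDisk : Set Pt := {p | p.1 ^ 2 + p.2 ^ 2 < 1 ∧ 0 ≤ p.2}

/-- `z₀` is a regular point of `f` (relative to the domain `W`): there are an open
neighbourhood `U ⊆ W` of `z₀` and a homeomorphism `φ : U ≃ₜ Int D²` with `φ z₀ = 0`
and `f ∘ φ⁻¹ (z) = Re z + f z₀`. -/
def IsRegularPoint (W : Set Pt) (f : Pt → ℝ) (z₀ : Pt) : Prop :=
  ∃ (U : Set Pt) (_ : IsOpen U) (_ : U ⊆ W) (hz : z₀ ∈ U) (φ : U ≃ₜ openDisk),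
    (φ ⟨z₀, hz⟩ : Pt) = (0, 0) ∧
    ∀ z : openDisk, f (φ.symm z : Pt) = (z : Pt).1 + f z₀

/-- `z₀` is a regular boundary point of `f` on the domain `D`: there are a
neighbourhood `U` of `z₀` in `D` and a homeomorphism `ψ : U ≃ₜ D²₊` with `ψ z₀ = 0`,
`ψ (U ∩ f⁻¹(f z₀)) = {0} × [0,1)`, `ψ (U ∩ Fr D) = (−1,1) × {0}`, and `f ∘ ψ⁻¹`
strictly monotone on `(−1,1) × {0}`. -/
def IsRegularBoundaryPoint (D : Set Pt) (f : Pt → ℝ) (z₀ : Pt) : Prop :=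
  ∃ (U : Set Pt) (_ : U ⊆ D) (hz : z₀ ∈ U) (_ : ∃ V : Set Pt, IsOpen V ∧ U = V ∩ D)
    (ψ : U ≃ₜ chartHalfDisk),
    (ψ ⟨z₀, hz⟩ : Pt) = (0, 0) ∧
    (∀ z : U, f (z : Pt) = f z₀ ↔ (ψ z : Pt).1 = 0) ∧
    (∀ z : U, (z : Pt) ∈ frontier D ↔ (ψ z : Pt).2 = 0) ∧
    (∃ g : ℝ → ℝ,
      (StrictMonoOn g (Ioo (-1 : ℝ) 1) ∨ StrictAntiOn g (Ioo (-1 : ℝ) 1)) ∧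
      ∀ (x : ℝ) (hx : x ∈ Ioo (-1 : ℝ) 1),
        g x = f (ψ.symm ⟨(x, 0),
          ⟨by obtain ⟨h1, h2⟩ := hx; simp only [] ; nlinarith, le_refl 0⟩⟩ : Pt))

/-- A `U`-trajectory of `f` inside `D`: a simple continuous curve along which `f`
is strictly monotone. -/
def IsUTrajectory (D : Set Pt) (f : Pt → ℝ) (γ : ℝ → Pt) : Prop :=
  ContinuousOn γ (Icc 0 1) ∧ InjOn γ (Icc 0 1) ∧ γ '' Icc 0 1 ⊆ D ∧
    (StrictMonoOn (f ∘ γ) (Icc 0 1) ∨ StrictAntiOn (f ∘ γ) (Icc 0 1))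

/-- `d(p₀, …, p_n)`: the minimum of the distances of consecutive points `λ (t i)`
along the curve (by convention `0` when `n = 0`). -/
def chainMin (lam : ℝ → Pt) (n : ℕ) (t : Fin (n + 1) → ℝ) : ℝ :=
  sInf (Set.range fun i : Fin n => dist (lam (t i.castSucc)) (lam (t i.succ)))

/-- `μ_n(λ) = sup { d(p₀, …, p_n) }` over all monotone sequences of parameters in `I`. -/
def muN (lam : ℝ → Pt) (n : ℕ) : ℝ :=
  sSup {r | ∃ t : Fin (n + 1) → ℝ, Monotone t ∧ (∀ i, t i ∈ Icc (0:ℝ) 1) ∧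
    r = chainMin lam n t}

/-- The `μ`-length `μ_λ = Σ_{n ≥ 1} μ_n(λ) / 2ⁿ` of a curve `λ : I → ℝ²`. -/
def muLength (lam : ℝ → Pt) : ℝ := ∑' n : ℕ, muN lam (n + 1) / 2 ^ (n + 1)

/-- The `μ`-length of `λ` from `0` to `t`. -/
def muUpTo (lam : ℝ → Pt) (t : ℝ) : ℝ := muLength fun u => lam (t * u)


private lemma exists_small_gap {s : ℝ} (n : ℕ) (hn : 0 < n) (f : ℕ → ℝ)
    (hmono : ∀ k, k < n → f k ≤ f (k + 1)) (hbd : f n - f 0 ≤ s) :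
    ∃ k, k < n ∧ f (k + 1) - f k ≤ s / n := by
  by_contra h
  push_neg at h
  have h2 : ∑ _k ∈ Finset.range n, (s / n) < ∑ k ∈ Finset.range n, (f (k + 1) - f k) :=
    Finset.sum_lt_sum_of_nonempty (Finset.nonempty_range_iff.mpr hn.ne')
      (fun k hk => h k (Finset.mem_range.mp hk))
  rw [Finset.sum_range_sub, Finset.sum_const, Finset.card_range, nsmul_eq_mul] at h2
  have hn' : (0:ℝ) < n := by exact_mod_cast hn
  have he : (n : ℝ) * (s / n) = s := by field_simp
  linarith

private lemma seg_param (lam : ℝ → Pt) (A B : Pt) (s : ℝ)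
    (hcont : ContinuousOn lam (Icc 0 1)) (hinj : InjOn lam (Icc 0 1))
    (himg : lam '' Icc 0 1 = segment ℝ A B) (hs : dist A B = s) (hs0 : 0 < s) :
    ∃ g : ℝ → ℝ,
      (∀ t ∈ Icc (0:ℝ) 1, g t ∈ Icc (0:ℝ) 1) ∧
      (∀ t ∈ Icc (0:ℝ) 1, lam t = AffineMap.lineMap A B (g t)) ∧
      (∀ c ∈ Icc (0:ℝ) 1, ∃ t ∈ Icc (0:ℝ) 1, g t = c) ∧
      (StrictMonoOn g (Icc 0 1) ∨ StrictAntiOn g (Icc 0 1)) := by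
  set g : ℝ → ℝ := fun t => dist A (lam t) / s with hg
  have key : ∀ t ∈ Icc (0:ℝ) 1, g t ∈ Icc (0:ℝ) 1 ∧ lam t = AffineMap.lineMap A B (g t) := by
    intro t ht
    have hmem : lam t ∈ segment ℝ A B := himg ▸ mem_image_of_mem _ ht
    rw [segment_eq_image_lineMap] at hmem
    obtain ⟨c, hc, hlc⟩ := hmem
    have hgc : g t = c := by
      rw [hg]
      simp only []
      rw [← hlc, dist_left_lineMap, hs, Real.norm_eq_abs, abs_of_nonneg hc.1]
      field_simp
    exact ⟨hgc ▸ hc, by rw [hgc, ← hlc]⟩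
  have gmem : ∀ t ∈ Icc (0:ℝ) 1, g t ∈ Icc (0:ℝ) 1 := fun t ht => (key t ht).1
  have glin : ∀ t ∈ Icc (0:ℝ) 1, lam t = AffineMap.lineMap A B (g t) := fun t ht => (key t ht).2
  have gsurj : ∀ c ∈ Icc (0:ℝ) 1, ∃ t ∈ Icc (0:ℝ) 1, g t = c := by
    intro c hc
    have hmem : AffineMap.lineMap A B c ∈ lam '' Icc 0 1 := by
      rw [himg, segment_eq_image_lineMap]; exact mem_image_of_mem _ hc
    obtain ⟨t, ht, hlt⟩ := hmem
    refine ⟨t, ht, ?_⟩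
    have hgt0 : dist (AffineMap.lineMap A B (g t)) (AffineMap.lineMap A B c) = 0 := by
      rw [← glin t ht, hlt, dist_self]
    rw [dist_lineMap_lineMap, hs] at hgt0
    rcases mul_eq_zero.mp hgt0 with h | h
    · exact dist_eq_zero.mp h
    · exact absurd h hs0.ne'
  have gcont : ContinuousOn g (Icc 0 1) :=
    (((continuous_const.dist continuous_id).comp_continuousOn hcont).div_const s)
  have ginj : InjOn g (Icc 0 1) := by
    intro t ht u hu h
    apply hinj ht hu
    rw [glin t ht, glin u hu, h]
  exact ⟨g, gmem, glin, gsurj,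
    ContinuousOn.strictMonoOn_of_injOn_Icc' zero_le_one gcont ginj⟩

private lemma muN_seg (lam : ℝ → Pt) (A B : Pt) (s : ℝ)
    (hcont : ContinuousOn lam (Icc 0 1)) (hinj : InjOn lam (Icc 0 1))
    (himg : lam '' Icc 0 1 = segment ℝ A B) (hs : dist A B = s) (hs0 : 0 < s)
    (n : ℕ) (hn : 1 ≤ n) : muN lam n = s / n := by
  obtain ⟨g, gmem, glin, gsurj, gma⟩ := seg_param lam A B s hcont hinj himg hs hs0
  have hdist : ∀ t ∈ Icc (0:ℝ) 1, ∀ u ∈ Icc (0:ℝ) 1,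
      dist (lam t) (lam u) = |g t - g u| * s := by
    intro t ht u hu
    rw [glin t ht, glin u hu, dist_lineMap_lineMap, hs, Real.dist_eq]
  have hne : Nonempty (Fin n) := Fin.pos_iff_nonempty.mp hn
  have hnR : (0:ℝ) < n := by exact_mod_cast hn
  have hub : ∀ r ∈ {r | ∃ t : Fin (n+1) → ℝ, Monotone t ∧ (∀ i, t i ∈ Icc (0:ℝ) 1) ∧
      r = chainMin lam n t}, r ≤ s / n := by
    rintro r ⟨t, htm, htmem, rfl⟩
    obtain ⟨y, hym, hy01, hyd⟩ : ∃ y : Fin (n+1) → ℝ, Monotone y ∧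
        (∀ i, y i ∈ Icc (0:ℝ) 1) ∧
        ∀ i : Fin n, dist (lam (t i.castSucc)) (lam (t i.succ)) =
          (y i.succ - y i.castSucc) * s := by
      rcases gma with hmono | hanti
      · refine ⟨fun i => g (t i), ?_, fun i => gmem _ (htmem i), ?_⟩
        · exact fun i j hij => hmono.monotoneOn (htmem i) (htmem j) (htm hij)
        · intro i
          rw [hdist _ (htmem _) _ (htmem _), abs_sub_comm,
            abs_of_nonneg (sub_nonneg.mpr (hmono.monotoneOn (htmem _) (htmem _)
              (htm i.castSucc_le_succ)))]
      · refine ⟨fun i => 1 - g (t i), ?_, ?_, ?_⟩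
        · intro i j hij
          have hh := hanti.antitoneOn (htmem i) (htmem j) (htm hij)
          simp only []
          linarith
        · intro i
          obtain ⟨ha, hb⟩ := gmem _ (htmem i)
          exact ⟨by simp only []; linarith, by simp only []; linarith⟩
        · intro i
          have hle := hanti.antitoneOn (htmem i.castSucc) (htmem i.succ)
            (htm i.castSucc_le_succ)
          rw [hdist _ (htmem _) _ (htmem _), abs_of_nonneg (sub_nonneg.mpr hle)]
          ring_nf
    set f : ℕ → ℝ := fun k => y ⟨min k n, by omega⟩ with hf
    have hfm : ∀ k, k < n → f k ≤ f (k + 1) := by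
      intro k hk
      exact hym (by rw [Fin.mk_le_mk]; omega)
    have hbd : f n - f 0 ≤ 1 := by
      obtain ⟨ha, hb⟩ := hy01 ⟨min n n, by omega⟩
      obtain ⟨hc, hd⟩ := hy01 ⟨min 0 n, by omega⟩
      simp only [hf]
      linarith
    obtain ⟨k, hk, hgap⟩ := exists_small_gap n hn f hfm hbd
    have hle : chainMin lam n t ≤
        dist (lam (t (⟨k, hk⟩ : Fin n).castSucc)) (lam (t (⟨k, hk⟩ : Fin n).succ)) :=
      csInf_le (Set.Finite.bddBelow (Set.finite_range _)) ⟨⟨k, hk⟩, rfl⟩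
    rw [hyd ⟨k, hk⟩] at hle
    have e1 : y (⟨k, hk⟩ : Fin n).succ = f (k + 1) := by
      simp only [hf]
      congr 1
      apply Fin.ext
      simp only [Fin.val_succ]
      omega
    have e2 : y (⟨k, hk⟩ : Fin n).castSucc = f k := by
      simp only [hf]
      congr 1
      apply Fin.ext
      simp only [Fin.coe_castSucc]
      omega
    rw [e1, e2] at hle
    calc chainMin lam n t ≤ (f (k + 1) - f k) * s := hle
      _ ≤ (1 / n) * s := mul_le_mul_of_nonneg_right hgap hs0.le
      _ = s / n := by ring
  have hmem : s / n ∈ {r | ∃ t : Fin (n+1) → ℝ, Monotone t ∧ (∀ i, t i ∈ Icc (0:ℝ) 1) ∧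
      r = chainMin lam n t} := by
    obtain ⟨c, hc01, hcd, hcord⟩ : ∃ c : Fin (n+1) → ℝ, (∀ i, c i ∈ Icc (0:ℝ) 1) ∧
        (∀ i : Fin n, |c i.succ - c i.castSucc| = 1 / n) ∧
        (∀ i j : Fin (n+1), i ≤ j → ∀ ti tj, ti ∈ Icc (0:ℝ) 1 → tj ∈ Icc (0:ℝ) 1 →
          g ti = c i → g tj = c j → ti ≤ tj) := by
      rcases gma with hmono | hanti
      · refine ⟨fun i => (i : ℝ) / n, ?_, ?_, ?_⟩
        · intro i
          have hi : (i : ℕ) ≤ n := by omega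
          have hiR : (i : ℝ) ≤ n := by exact_mod_cast hi
          exact ⟨by positivity, by rw [div_le_one hnR]; exact hiR⟩
        · intro i
          have h1 : ((i.succ : Fin (n+1)) : ℕ) = (i : ℕ) + 1 := rfl
          have h2 : ((i.castSucc : Fin (n+1)) : ℕ) = (i : ℕ) := rfl
          simp only [h1, h2]
          rw [abs_of_nonneg]
          · push_cast
            field_simp
            ring
          · apply sub_nonneg.mpr
            gcongr
            push_cast
            linarith
        · intro i j hij ti tj hti htj hgi hgj
          by_contra hlt
          push_neg at hlt
          have hg := hmono htj hti hlt
          rw [hgi, hgj] at hg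
          simp only [] at hg
          have hijn : (i : ℕ) ≤ (j : ℕ) := hij
          have hjR : (i : ℝ) ≤ (j : ℝ) := by exact_mod_cast hijn
          rw [div_lt_div_iff_of_pos_right hnR] at hg
          linarith
      · refine ⟨fun i => ((n : ℝ) - i) / n, ?_, ?_, ?_⟩
        · intro i
          have hi : (i : ℕ) ≤ n := by omega
          have hiR : (i : ℝ) ≤ n := by exact_mod_cast hi
          have hiR0 : (0:ℝ) ≤ (i : ℝ) := Nat.cast_nonneg _
          constructor
          · apply div_nonneg (by linarith) hnR.le
          · rw [div_le_one hnR]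
            linarith
        · intro i
          have h1 : ((i.succ : Fin (n+1)) : ℕ) = (i : ℕ) + 1 := rfl
          have h2 : ((i.castSucc : Fin (n+1)) : ℕ) = (i : ℕ) := rfl
          simp only [h1, h2]
          rw [abs_sub_comm, abs_of_nonneg]
          · push_cast
            first
            | (field_simp; ring)
            | field_simp
          · apply sub_nonneg.mpr
            gcongr
            push_cast
            linarith
        · intro i j hij ti tj hti htj hgi hgj
          by_contra hlt
          push_neg at hlt
          have hg := hanti htj hti hlt
          rw [hgi, hgj] at hg
          simp only [] at hg
          have hijn : (i : ℕ) ≤ (j : ℕ) := hij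
          have hjR : (i : ℝ) ≤ (j : ℝ) := by exact_mod_cast hijn
          rw [div_lt_div_iff_of_pos_right hnR] at hg
          linarith
    choose t ht hgt using fun i => gsurj (c i) (hc01 i)
    refine ⟨t, ?_, ht, ?_⟩
    · intro i j hij
      exact hcord i j hij (t i) (t j) (ht i) (ht j) (hgt i) (hgt j)
    · unfold chainMin
      have hconst : (fun i : Fin n => dist (lam (t i.castSucc)) (lam (t i.succ))) =
          fun _ : Fin n => s / n := by
        funext i
        rw [hdist _ (ht _) _ (ht _), hgt, hgt, abs_sub_comm, hcd i]
        ring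
      rw [hconst, Set.range_const, csInf_singleton]
  unfold muN
  exact le_antisymm (csSup_le ⟨s / n, hmem⟩ hub) (le_csSup ⟨s / n, hub⟩ hmem)

private lemma muLength_seg (lam : ℝ → Pt) (A B : Pt) (s : ℝ)
    (hcont : ContinuousOn lam (Icc 0 1)) (hinj : InjOn lam (Icc 0 1))
    (himg : lam '' Icc 0 1 = segment ℝ A B) (hs : dist A B = s) (hs0 : 0 < s) :
    muLength lam = s * ∑' n : ℕ, (1 : ℝ) / (((n : ℝ) + 1) * 2 ^ (n + 1)) := by
  unfold muLength
  rw [← tsum_mul_left]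
  congr 1
  funext n
  rw [muN_seg lam A B s hcont hinj himg hs hs0 (n + 1) (by omega)]
  have h1 : ((n : ℝ) + 1) ≠ 0 := by positivity
  have h2 : (2 : ℝ) ^ (n + 1) ≠ 0 := by positivity
  push_cast
  field_simp

private lemma image_Icc_seg (lam : ℝ → Pt) (A B : Pt) (s : ℝ)
    (hcont : ContinuousOn lam (Icc 0 1)) (hinj : InjOn lam (Icc 0 1))
    (himg : lam '' Icc 0 1 = segment ℝ A B) (hs : dist A B = s) (hs0 : 0 < s)
    (τ : ℝ) (hτ : τ ∈ Icc (0:ℝ) 1) :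
    lam '' Icc 0 τ = segment ℝ (lam 0) (lam τ) := by
  obtain ⟨g, gmem, glin, gsurj, gma⟩ := seg_param lam A B s hcont hinj himg hs hs0
  have h0 : (0:ℝ) ∈ Icc (0:ℝ) 1 := ⟨le_refl 0, zero_le_one⟩
  have hsub : Icc (0:ℝ) τ ⊆ Icc (0:ℝ) 1 := Icc_subset_Icc le_rfl hτ.2
  have himg2 : g '' Icc 0 τ = uIcc (g 0) (g τ) := by
    apply Subset.antisymm
    · rintro _ ⟨u, hu, rfl⟩
      rcases gma with hmono | hanti
      · rw [uIcc_of_le (hmono.monotoneOn h0 hτ hτ.1)]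
        exact ⟨hmono.monotoneOn h0 (hsub hu) hu.1, hmono.monotoneOn (hsub hu) hτ hu.2⟩
      · rw [uIcc_of_ge (hanti.antitoneOn h0 hτ hτ.1)]
        exact ⟨hanti.antitoneOn (hsub hu) hτ hu.2, hanti.antitoneOn h0 (hsub hu) hu.1⟩
    · intro x hx
      have hx01 : x ∈ Icc (0:ℝ) 1 := by
        obtain ⟨ha, hb⟩ := gmem 0 h0
        obtain ⟨hc, hd⟩ := gmem τ hτ
        rcases le_total (g 0) (g τ) with h | h
        · rw [uIcc_of_le h] at hx
          exact ⟨le_trans ha hx.1, le_trans hx.2 hd⟩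
        · rw [uIcc_of_ge h] at hx
          exact ⟨le_trans hc hx.1, le_trans hx.2 hb⟩
      obtain ⟨u, hu, hgu⟩ := gsurj x hx01
      refine ⟨u, ⟨hu.1, ?_⟩, hgu⟩
      rcases gma with hmono | hanti
      · rw [uIcc_of_le (hmono.monotoneOn h0 hτ hτ.1)] at hx
        by_contra hlt
        push_neg at hlt
        have hg := hmono hτ hu hlt
        rw [hgu] at hg
        exact absurd hg (not_lt.mpr hx.2)
      · rw [uIcc_of_ge (hanti.antitoneOn h0 hτ hτ.1)] at hx
        by_contra hlt
        push_neg at hlt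
        have hg := hanti hτ hu hlt
        rw [hgu] at hg
        exact absurd hg (not_lt.mpr hx.1)
  have hcomp : lam '' Icc 0 τ = (AffineMap.lineMap A B : ℝ →ᵃ[ℝ] Pt) '' (g '' Icc 0 τ) := by
    rw [← image_comp]
    apply image_congr
    intro u hu
    exact glin u (hsub hu)
  rw [hcomp, himg2, glin 0 h0, glin τ hτ, ← segment_eq_uIcc, image_segment]

private lemma muLength_const_curve (p : Pt) : muLength (fun _ => p) = 0 := by
  unfold muLength
  have h : ∀ n : ℕ, muN (fun _ => p) (n + 1) = 0 := by
    intro n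
    unfold muN
    have hset : {r | ∃ t : Fin (n + 1 + 1) → ℝ, Monotone t ∧ (∀ i, t i ∈ Icc (0:ℝ) 1) ∧
        r = chainMin (fun _ => p) (n + 1) t} = {0} := by
      apply Subset.antisymm
      · rintro r ⟨t, _, _, rfl⟩
        unfold chainMin
        have hconst : (fun i : Fin (n + 1) => dist ((fun _ : ℝ => p) (t i.castSucc))
            ((fun _ : ℝ => p) (t i.succ))) = fun _ : Fin (n + 1) => (0:ℝ) := by
          funext i
          simp
        rw [hconst, Set.range_const, csInf_singleton]
        rfl
      · rintro r (rfl : r = 0)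
        refine ⟨fun _ => 0, monotone_const, fun _ => ⟨le_refl 0, zero_le_one⟩, ?_⟩
        unfold chainMin
        simp only [dist_self]
        rw [Set.range_const, csInf_singleton]
    rw [hset, csSup_singleton]
  simp only [h, zero_div, tsum_zero]

/-- For a simple continuous curve `λ` whose support is a line segment of length `s`:
`μ_n(λ) = s / n` for all `n ≥ 1`, hence `μ_λ = s · S` with `S = Σ_{n≥1} 1/(n·2ⁿ)`; and the
`μ`-parametrization is linear, i.e. the `μ`-length of `λ` from `0` to `τ` equals
`S · dist (λ 0) (λ τ)`. -/
theorem mu_length_of_segment (lam : ℝ → Pt) (A B : Pt) (s : ℝ)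
    (hcont : ContinuousOn lam (Icc 0 1)) (hinj : InjOn lam (Icc 0 1))
    (himg : lam '' Icc 0 1 = segment ℝ A B) (hs : dist A B = s) :
    (∀ n : ℕ, 1 ≤ n → muN lam n = s / n) ∧
    muLength lam = s * ∑' n : ℕ, (1 : ℝ) / (((n : ℝ) + 1) * 2 ^ (n + 1)) ∧
    ∀ τ ∈ Icc (0:ℝ) 1,
      muUpTo lam τ =
        (∑' n : ℕ, (1 : ℝ) / (((n : ℝ) + 1) * 2 ^ (n + 1))) * dist (lam 0) (lam τ) := by
  have h0 : (0:ℝ) ∈ Icc (0:ℝ) 1 := ⟨le_refl 0, zero_le_one⟩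
  have h1 : (1:ℝ) ∈ Icc (0:ℝ) 1 := ⟨zero_le_one, le_refl 1⟩
  have hAB : A ≠ B := by
    intro h
    rw [h, segment_same] at himg
    have e0 : lam 0 ∈ ({B} : Set Pt) := himg ▸ mem_image_of_mem lam h0
    have e1 : lam 1 ∈ ({B} : Set Pt) := himg ▸ mem_image_of_mem lam h1
    rw [mem_singleton_iff] at e0 e1
    exact zero_ne_one (hinj h0 h1 (e0.trans e1.symm))
  have hs0 : 0 < s := hs ▸ dist_pos.mpr hAB
  refine ⟨fun n hn => muN_seg lam A B s hcont hinj himg hs hs0 n hn,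
    muLength_seg lam A B s hcont hinj himg hs hs0, ?_⟩
  intro τ hτ
  rcases eq_or_lt_of_le hτ.1 with hτ0 | hτ0
  · unfold muUpTo
    have he : (fun u : ℝ => lam (τ * u)) = fun _ => lam 0 := by
      funext u
      rw [← hτ0, zero_mul]
    rw [he, muLength_const_curve, ← hτ0, dist_self, mul_zero]
  · set lam' : ℝ → Pt := fun u => lam (τ * u) with hlam'
    have hmaps : ∀ u ∈ Icc (0:ℝ) 1, τ * u ∈ Icc (0:ℝ) 1 := by
      intro u hu
      constructor
      · exact mul_nonneg hτ.1 hu.1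
      · calc τ * u ≤ τ * 1 := mul_le_mul_of_nonneg_left hu.2 hτ.1
          _ = τ := mul_one τ
          _ ≤ 1 := hτ.2
    have hcont' : ContinuousOn lam' (Icc 0 1) :=
      hcont.comp ((continuous_const.mul continuous_id).continuousOn) hmaps
    have hinj' : InjOn lam' (Icc 0 1) := by
      intro u hu v hv h
      exact mul_left_cancel₀ hτ0.ne' (hinj (hmaps u hu) (hmaps v hv) h)
    have himgIcc : (fun u : ℝ => τ * u) '' Icc 0 1 = Icc 0 τ := by
      ext z
      constructor
      · rintro ⟨u, hu, rfl⟩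
        refine ⟨mul_nonneg hτ.1 hu.1, ?_⟩
        calc τ * u ≤ τ * 1 := mul_le_mul_of_nonneg_left hu.2 hτ.1
          _ = τ := mul_one τ
      · intro hz
        refine ⟨z / τ, ⟨div_nonneg hz.1 hτ.1, (div_le_one hτ0).mpr hz.2⟩, ?_⟩
        show τ * (z / τ) = z
        rw [mul_comm]
        exact div_mul_cancel₀ z hτ0.ne'
    have himg' : lam' '' Icc 0 1 = segment ℝ (lam 0) (lam τ) := by
      have hc : lam' '' Icc 0 1 = lam '' ((fun u : ℝ => τ * u) '' Icc 0 1) :=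
        (image_comp lam (fun u : ℝ => τ * u) (Icc 0 1))
      rw [hc, himgIcc]
      exact image_Icc_seg lam A B s hcont hinj himg hs hs0 τ hτ
    have hd0 : 0 < dist (lam 0) (lam τ) := by
      apply dist_pos.mpr
      intro h
      exact hτ0.ne (hinj h0 hτ h)
    show muLength lam' = _
    rw [muLength_seg lam' (lam 0) (lam τ) (dist (lam 0) (lam τ)) hcont' hinj' himg' rfl hd0,
      mul_comm]
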